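/- Define A^(0) = the n^{k-1} × n^{k-1} × 1 tensor whose single slice is the identity matrix I_{n^{k-1}}, and recursively A^(i+1) = [[A^(i) 0, 0 A^(i)],[0 A^(i), 0 0]] (a 2×2 block tensor where each block is a concatenation along the third axis, so A^(i+1) has dimensions 2^{i+1} n^{k-1} × 2^{i+1} n^{k-1} × 2^{i+1}). Then for every i, A^(i) is nondegenerate: no nontrivial linear combination of its 2^i slices vanishes, and its characteristic matrix has full row and column rank 2^i n^{k-1}. -/

import Mathlib

open scoped BigOperators

noncomputable def tRank (F : Type) [Field F] {I J K : Type} [Fintype I] [Fintype J] [Fintype K]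
    (A : I → J → K → F) : ℕ :=
  sInf {m | ∃ x : Fin m → I → F, ∃ y : Fin m → J → F, ∃ z : Fin m → K → F,
    ∀ i j k, A i j k = ∑ t, x t i * y t j * z t k}

noncomputable def charMatrix {F : Type} [Field F] {I J K : Type} [Fintype K]
    (A : I → J → K → F) : Matrix I J (MvPolynomial K F) :=
  Matrix.of fun i j => ∑ k, MvPolynomial.X k * MvPolynomial.C (A i j k)

noncomputable def colRank (F : Type) [Field F] {I J K : Type} [Fintype I] [Fintype J] [Fintype K]
    (A : I → J → K → F) : ℕ :=
  ((charMatrix A).map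
    (algebraMap (MvPolynomial K F) (FractionRing (MvPolynomial K F)))).rank

noncomputable def rowRank (F : Type) [Field F] {I J K : Type} [Fintype I] [Fintype J] [Fintype K]
    (A : I → J → K → F) : ℕ :=
  (((charMatrix A).transpose).map
    (algebraMap (MvPolynomial K F) (FractionRing (MvPolynomial K F)))).rank

/-- A tensor is nondegenerate if no nontrivial linear combination of its slices vanishes
and its characteristic matrix has full row and column rank. -/
def Nondeg (F : Type) [Field F] {I J K : Type} [Fintype I] [Fintype J] [Fintype K]
    (A : I → J → K → F) : Prop :=
  (∀ c : K → F, (∀ i j, ∑ k, c k * A i j k = 0) → c = 0) ∧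
  rowRank F A = Fintype.card I ∧ colRank F A = Fintype.card J

/-- Row/column index type of the recursive tensor `A^(i)`. -/
def ArecIdx (m : ℕ) : ℕ → Type
  | 0 => Fin m
  | (i+1) => Fin 2 × ArecIdx m i

/-- Slice index type of the recursive tensor `A^(i)`. -/
def ArecSl : ℕ → Type
  | 0 => Fin 1
  | (i+1) => Fin 2 × ArecSl i

instance instArecIdxFintype (m : ℕ) : (i : ℕ) → Fintype (ArecIdx m i)
  | 0 => inferInstanceAs (Fintype (Fin m))
  | (i+1) => @instFintypeProd _ _ _ (instArecIdxFintype m i)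

instance instArecSlFintype : (i : ℕ) → Fintype (ArecSl i)
  | 0 => inferInstanceAs (Fintype (Fin 1))
  | (i+1) => @instFintypeProd _ _ _ (instArecSlFintype i)

instance instArecIdxDecEq (m : ℕ) : (i : ℕ) → DecidableEq (ArecIdx m i)
  | 0 => inferInstanceAs (DecidableEq (Fin m))
  | (i+1) => @instDecidableEqProd _ _ _ (instArecIdxDecEq m i)

/-- The recursive tensor: `A^(0) = I_m` (one slice), and
`A^(i+1) = [[A^(i)(s), A^(i)(t)], [A^(i)(t), 0]]`, where the first component of the
slice index chooses between the `s`-variables (`0`) and the `t`-variables (`1`). -/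
def Arec (F : Type) [Field F] (m : ℕ) : (i : ℕ) → ArecIdx m i → ArecIdx m i → ArecSl i → F
  | 0 => fun r c _ => if r = c then (1 : F) else 0
  | (i+1) => fun rc cc el =>
      if el.1 = 0 then
        (if rc.1 = 0 ∧ cc.1 = 0 then Arec F m i rc.2 cc.2 el.2 else 0)
      else
        (if (rc.1 = 0 ∧ cc.1 = 1) ∨ (rc.1 = 1 ∧ cc.1 = 0) then Arec F m i rc.2 cc.2 el.2 else 0)


lemma card_arecIdx (m : ℕ) : ∀ i, Fintype.card (ArecIdx m i) = 2 ^ i * m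
  | 0 => by simp [ArecIdx, instArecIdxFintype]; exact Fintype.card_fin m
  | (i+1) => by
    rw [show Fintype.card (ArecIdx m (i+1)) = Fintype.card (Fin 2 × ArecIdx m i) from rfl]
    rw [Fintype.card_prod, card_arecIdx m i, pow_succ, Fintype.card_fin]
    ring

lemma slices_indep (F : Type) [Field F] (m : ℕ) (hm : 0 < m) :
    ∀ i (c : ArecSl i → F),
      (∀ r r' : ArecIdx m i, ∑ e, c e * Arec F m i r r' e = 0) → c = 0
  | 0 => by
    intro c h
    have r : ArecIdx m 0 := (⟨0, hm⟩ : Fin m)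
    have h0 := h r r
    rw [show (∑ e, c e * Arec F m 0 r r e)
        = ∑ e : Fin 1, c e * Arec F m 0 r r e from rfl, Fin.sum_univ_one] at h0
    simp [Arec] at h0
    funext e
    have he : e = ((0 : Fin 1) : ArecSl 0) := Subsingleton.elim (α := Fin 1) e 0
    rw [he]
    show c _ = 0
    simpa using h0
  | (i+1) => by
    intro c h
    have key : ∀ b : Fin 2, (fun e => c (b, e)) = 0 := by
      intro b
      apply slices_indep F m hm i
      intro r r'
      have hb := h ((0 : Fin 2), r) ((b, r') : Fin 2 × ArecIdx m i)
      rw [show (∑ e, c e * Arec F m (i+1) (0, r) (b, r') e)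
          = ∑ p : Fin 2 × ArecSl i, c p * Arec F m (i+1) (0, r) (b, r') p from rfl,
        Fintype.sum_prod_type, Fin.sum_univ_two] at hb
      fin_cases b <;> simpa [Arec] using hb
    funext p
    obtain ⟨b, e⟩ := (p : Fin 2 × ArecSl i)
    exact congrFun (key b) e

open MvPolynomial in
lemma det_charMatrix_arec_zero (F : Type) [Field F] (m : ℕ) :
    (charMatrix (Arec F m 0)).det ≠ 0 := by
    have hcm : charMatrix (Arec F m 0)
        = (MvPolynomial.X ((0 : Fin 1) : ArecSl 0) : MvPolynomial (ArecSl 0) F)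
          • (1 : Matrix (ArecIdx m 0) (ArecIdx m 0) (MvPolynomial (ArecSl 0) F)) := by
      funext r c
      rw [show (charMatrix (Arec F m 0) r c)
          = ∑ e : Fin 1, MvPolynomial.X (e : ArecSl 0) * MvPolynomial.C (Arec F m 0 r c e)
          from rfl, Fin.sum_univ_one]
      simp only [Arec, Matrix.smul_apply, Matrix.one_apply, smul_eq_mul]
      split <;> simp
      · exact mul_one _
      · exact mul_zero _
    rw [hcm, Matrix.det_smul, Matrix.det_one, mul_one]
    exact pow_ne_zero _ (MvPolynomial.X_ne_zero _)

open MvPolynomial in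
lemma det_charMatrix_arec_succ (F : Type) [Field F] (m i : ℕ)
    (ih : (charMatrix (Arec F m i)).det ≠ 0) :
    (charMatrix (Arec F m (i+1))).det ≠ 0 := by
    classical
    set I := ArecIdx m i with hI
    let B : Fin 2 → Matrix I I (MvPolynomial (ArecSl (i+1)) F) := fun b =>
      (charMatrix (Arec F m i)).map
        (MvPolynomial.rename (fun e => ((b, e) : Fin 2 × ArecSl i)))
    let e : (Fin 2 × I) ≃ (I ⊕ I) :=
      { toFun := fun x => if x.1 = 0 then Sum.inl x.2 else Sum.inr x.2
        invFun := Sum.elim (fun a => (0, a)) (fun a => (1, a))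
        left_inv := by rintro ⟨b, a⟩; fin_cases b <;> simp
        right_inv := by rintro (a | a) <;> simp }
    have hcm : charMatrix (Arec F m (i+1))
        = (Matrix.fromBlocks (B 0) (B 1) (B 1) 0).submatrix e e := by
      funext x y
      obtain ⟨a, r⟩ := (x : Fin 2 × I)
      obtain ⟨b, c⟩ := (y : Fin 2 × I)
      rw [show (charMatrix (Arec F m (i+1)) (a, r) (b, c))
          = ∑ p : Fin 2 × ArecSl i,
              MvPolynomial.X (σ := ArecSl (i+1)) p * MvPolynomial.C (σ := ArecSl (i+1)) (Arec F m (i+1) (a, r) (b, c) p)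
          from rfl, Fintype.sum_prod_type, Fin.sum_univ_two]
      fin_cases a <;> fin_cases b <;>
        simp [B, e, Arec, charMatrix, Matrix.submatrix_apply, rename_X, rename_C,
          Finset.mul_sum, map_sum] <;> erw [Matrix.map_apply, Matrix.of_apply] <;> simp [map_sum, rename_X, rename_C] <;> rfl
    have hB1 : (B 1).det ≠ 0 := by
      have hmd := AlgHom.map_det (R := F)
        (MvPolynomial.rename (fun e => (((1 : Fin 2), e) : Fin 2 × ArecSl i)))
        (charMatrix (Arec F m i))
      rw [AlgHom.mapMatrix_apply] at hmd
      intro h0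
      apply ih
      apply MvPolynomial.rename_injective
        (fun e => (((1 : Fin 2), e) : Fin 2 × ArecSl i))
        (fun a b hab => by simpa using hab)
      exact (hmd.trans h0).trans (map_zero _).symm
    have hswap : (Matrix.fromBlocks (B 0) (B 1) (B 1) 0).submatrix (Equiv.sumComm I I) id
        = Matrix.fromBlocks (B 1) 0 (B 0) (B 1) := by
      rw [show ⇑(Equiv.sumComm I I) = Sum.swap from rfl,
        Matrix.fromBlocks_submatrix_sum_swap_left, Matrix.submatrix_id_id]
    have hperm := Matrix.det_permute ((Equiv.sumComm I I) : Equiv.Perm (I ⊕ I))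
      (Matrix.fromBlocks (B 0) (B 1) (B 1) 0)
    rw [hswap, Matrix.det_fromBlocks_zero₁₂] at hperm
    rw [show (charMatrix (Arec F m (i+1))).det
        = (Matrix.fromBlocks (B 0) (B 1) (B 1) 0).det from
      (congrArg (fun M => M.det) hcm).trans (Matrix.det_submatrix_equiv_self e _)]
    intro h0
    rw [h0, mul_zero] at hperm
    exact hB1 (mul_self_eq_zero.mp hperm)

lemma det_charMatrix_arec (F : Type) [Field F] (m : ℕ) :
    ∀ i, (charMatrix (Arec F m i)).det ≠ 0
  | 0 => det_charMatrix_arec_zero F m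
  | (i+1) => det_charMatrix_arec_succ F m i (det_charMatrix_arec F m i)

lemma aux_rank_full {R : Type} [CommRing R] [IsDomain R] {n : Type} [Fintype n] [DecidableEq n]
    (M : Matrix n n R) (h : M.det ≠ 0) :
    (M.map (algebraMap R (FractionRing R))).rank = Fintype.card n := by
  have hinj := IsFractionRing.injective R (FractionRing R)
  have hd : (M.map (algebraMap R (FractionRing R))).det ≠ 0 := by
    rw [← RingHom.mapMatrix_apply, ← RingHom.map_det]
    intro h0
    exact h (hinj (by simpa using h0))
  exact Matrix.rank_of_isUnit _ ((Matrix.isUnit_iff_isUnit_det _).mpr (isUnit_iff_ne_zero.mpr hd))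

theorem arec_nondegenerate (F : Type) [Field F] (n k : ℕ) (hn : 1 ≤ n) (i : ℕ) :
    (∀ c : ArecSl i → F,
        (∀ r r' : ArecIdx (n ^ (k - 1)) i, ∑ e, c e * Arec F (n ^ (k - 1)) i r r' e = 0) →
        c = 0) ∧
    rowRank F (Arec F (n ^ (k - 1)) i) = 2 ^ i * n ^ (k - 1) ∧
    colRank F (Arec F (n ^ (k - 1)) i) = 2 ^ i * n ^ (k - 1) := by
  have hm : 0 < n ^ (k - 1) := pow_pos (by omega) _
  have hdet := det_charMatrix_arec F (n ^ (k - 1)) i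
  refine ⟨fun c h => slices_indep F (n ^ (k - 1)) hm i c h, ?_, ?_⟩
  · have hdt : ((charMatrix (Arec F (n ^ (k - 1)) i)).transpose).det ≠ 0 := by
      rwa [Matrix.det_transpose]
    rw [rowRank, aux_rank_full _ hdt, card_arecIdx]
  · rw [colRank, aux_rank_full _ hdet, card_arecIdx]
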